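/- Let a > 1, b > 1 and k ≥ 0 be real numbers. For t ≥ 0 set S₂(t) = Σ_{i=2}^{∞} i^{−k}·a^{−i}·exp(−b^{−i}·t). Then for every t ≥ 0 one has a^{−1}·∫_{2}^{∞} x^{−k}·a^{−(x−1)}·exp(−b^{−(x−1)}·t) dx ≤ S₂(t) ≤ a·∫_{2}^{∞} (x−1)^{−k}·a^{−x}·exp(−b^{−x}·t) dx, all three quantities being finite. -/

import Mathlib

open MeasureTheory

/-- integral bounds for `S₂(t) = Σ_{i=2}^∞ i^{-k} a^{-i} exp(-b^{-i}t)`: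
`a⁻¹ ∫_2^∞ x^{-k} a^{-(x-1)} exp(-b^{-(x-1)}t) dx ≤ S₂(t) ≤
 a ∫_2^∞ (x-1)^{-k} a^{-x} exp(-b^{-x}t) dx`, all quantities being finite. -/

private lemma sib_continuousOn (a b k t c d : ℝ) (ha : 0 < a) (hb : 0 < b) (hc : c ≤ 1) :
    ContinuousOn (fun x : ℝ => (x - c) ^ (-k) * a ^ (-(x - d)) * Real.exp (-b ^ (-(x - d)) * t))
      (Set.Ici 2) := by
  have hne : ∀ x ∈ Set.Ici (2:ℝ), x - c ≠ 0 := by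
    intro x hx; simp only [Set.mem_Ici] at hx; intro h; linarith [sub_eq_zero.mp h]
  have h1 : ContinuousOn (fun x : ℝ => (x - c) ^ (-k)) (Set.Ici 2) :=
    (continuousOn_id.sub continuousOn_const).rpow_const (fun x hx => Or.inl (hne x hx))
  have h2 : ContinuousOn (fun x : ℝ => a ^ (-(x - d))) (Set.Ici 2) :=
    continuousOn_const.rpow ((continuousOn_id.sub continuousOn_const).neg)
      (fun x _ => Or.inl (ne_of_gt ha))
  have h3 : ContinuousOn (fun x : ℝ => Real.exp (-b ^ (-(x - d)) * t)) (Set.Ici 2) := by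
    apply Real.continuous_exp.comp_continuousOn
    exact ((continuousOn_const.rpow ((continuousOn_id.sub continuousOn_const).neg)
      (fun x _ => Or.inl (ne_of_gt hb))).neg).mul continuousOn_const
  exact (h1.mul h2).mul h3

private lemma sib_integrable (a b k t c d : ℝ) (ha : 1 < a) (hb : 1 < b) (hk : 0 ≤ k)
    (ht : 0 ≤ t) (hc : c ≤ 1) :
    IntegrableOn (fun x : ℝ => (x - c) ^ (-k) * a ^ (-(x - d)) * Real.exp (-b ^ (-(x - d)) * t))
      (Set.Ici 2) := by
  have ha0 : (0:ℝ) < a := lt_trans one_pos ha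
  have hb0 : (0:ℝ) < b := lt_trans one_pos hb
  rw [integrableOn_Ici_iff_integrableOn_Ioi]
  apply Integrable.mono' (g := fun x : ℝ => a ^ d * Real.exp (-Real.log a * x))
  · exact (exp_neg_integrableOn_Ioi 2 (Real.log_pos ha)).const_mul _
  · exact ((sib_continuousOn a b k t c d ha0 hb0 hc).mono
      Set.Ioi_subset_Ici_self).aestronglyMeasurable measurableSet_Ioi
  · filter_upwards [ae_restrict_mem measurableSet_Ioi] with x hx
    simp only [Set.mem_Ioi] at hx
    have hxc : (1:ℝ) ≤ x - c := by linarith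
    have p1 : (x - c) ^ (-k) ≤ 1 :=
      Real.rpow_le_one_of_one_le_of_nonpos hxc (neg_nonpos.mpr hk)
    have p1' : (0:ℝ) ≤ (x - c) ^ (-k) := Real.rpow_nonneg (by linarith) _
    have p3 : Real.exp (-b ^ (-(x - d)) * t) ≤ 1 := by
      rw [Real.exp_le_one_iff]
      have : (0:ℝ) < b ^ (-(x - d)) := Real.rpow_pos_of_pos hb0 _
      nlinarith
    have p3' : (0:ℝ) < Real.exp (-b ^ (-(x - d)) * t) := Real.exp_pos _
    have p2 : a ^ (-(x - d)) = a ^ d * Real.exp (-Real.log a * x) := by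
      rw [Real.rpow_def_of_pos ha0, Real.rpow_def_of_pos ha0, ← Real.exp_add]
      ring_nf
    have p2' : (0:ℝ) < a ^ (-(x - d)) := Real.rpow_pos_of_pos ha0 _
    have hnorm : ‖(x - c) ^ (-k) * a ^ (-(x - d)) * Real.exp (-b ^ (-(x - d)) * t)‖
        = (x - c) ^ (-k) * a ^ (-(x - d)) * Real.exp (-b ^ (-(x - d)) * t) := by
      rw [Real.norm_eq_abs, abs_of_nonneg]; positivity
    rw [hnorm, ← p2]
    have key : (x - c) ^ (-k) * Real.exp (-b ^ (-(x - d)) * t) ≤ 1 :=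
      mul_le_one₀ p1 p3'.le p3
    nlinarith

private lemma sib_union (N : ℕ) :
    ⋃ i ∈ Finset.range N, Set.Ico ((i:ℝ) + 2) ((i:ℝ) + 3) = Set.Ico 2 ((N:ℝ) + 2) := by
  induction N with
  | zero => simp
  | succ n ih =>
    rw [Finset.range_add_one, Finset.set_biUnion_insert, ih, Set.union_comm,
      Set.Ico_union_Ico_eq_Ico (by linarith [Nat.cast_nonneg (α := ℝ) n])
        (by linarith)]
    push_cast; ring_nf


theorem series_integral_bounds
    (a b k : ℝ) (ha : 1 < a) (hb : 1 < b) (hk : 0 ≤ k) :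
    ∀ t : ℝ, 0 ≤ t →
      Summable (fun i : ℕ =>
        ((i : ℝ) + 2) ^ (-k) * a ^ (-((i : ℝ) + 2)) *
          Real.exp (-b ^ (-((i : ℝ) + 2)) * t)) ∧
      IntegrableOn (fun x : ℝ =>
        x ^ (-k) * a ^ (-(x - 1)) * Real.exp (-b ^ (-(x - 1)) * t)) (Set.Ici 2) ∧
      IntegrableOn (fun x : ℝ =>
        (x - 1) ^ (-k) * a ^ (-x) * Real.exp (-b ^ (-x) * t)) (Set.Ici 2) ∧
      a⁻¹ * ∫ x in Set.Ici (2 : ℝ),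
          x ^ (-k) * a ^ (-(x - 1)) * Real.exp (-b ^ (-(x - 1)) * t) ≤
        (∑' i : ℕ, ((i : ℝ) + 2) ^ (-k) * a ^ (-((i : ℝ) + 2)) *
          Real.exp (-b ^ (-((i : ℝ) + 2)) * t)) ∧
      (∑' i : ℕ, ((i : ℝ) + 2) ^ (-k) * a ^ (-((i : ℝ) + 2)) *
          Real.exp (-b ^ (-((i : ℝ) + 2)) * t)) ≤
        a * ∫ x in Set.Ici (2 : ℝ),
          (x - 1) ^ (-k) * a ^ (-x) * Real.exp (-b ^ (-x) * t) := by
  intro t ht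
  have ha0 : (0:ℝ) < a := lt_trans one_pos ha
  have hb0 : (0:ℝ) < b := lt_trans one_pos hb
  set fS : ℕ → ℝ := fun i => ((i : ℝ) + 2) ^ (-k) * a ^ (-((i : ℝ) + 2)) *
      Real.exp (-b ^ (-((i : ℝ) + 2)) * t) with hfS
  set L : ℝ → ℝ := fun x => x ^ (-k) * a ^ (-(x - 1)) * Real.exp (-b ^ (-(x - 1)) * t) with hL
  set H : ℝ → ℝ := fun x => (x - 1) ^ (-k) * a ^ (-x) * Real.exp (-b ^ (-x) * t) with hH
  -- Integrability
  have hIntL : IntegrableOn L (Set.Ici 2) := by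
    have := sib_integrable a b k t 0 1 ha hb hk ht (by norm_num)
    simpa [hL] using this
  have hIntH : IntegrableOn H (Set.Ici 2) := by
    have := sib_integrable a b k t 1 0 ha hb hk ht le_rfl
    simpa [hH] using this
  -- Summability
  have hfS_nonneg : ∀ i, 0 ≤ fS i := fun i => by
    simp only [hfS]; positivity
  have hfle : ∀ i : ℕ, fS i ≤ a ^ (-2:ℝ) * (a⁻¹) ^ i := by
    intro i
    have hi : (0:ℝ) ≤ (i:ℝ) := Nat.cast_nonneg i
    have e : a ^ (-((i:ℝ) + 2)) = a ^ (-2:ℝ) * (a⁻¹) ^ i := by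
      rw [show -((i:ℝ) + 2) = (-2) + -(i:ℝ) from by ring, Real.rpow_add ha0]
      congr 1
      rw [Real.rpow_neg ha0.le, Real.rpow_natCast, inv_pow]
    have p1 : ((i:ℝ) + 2) ^ (-k) ≤ 1 :=
      Real.rpow_le_one_of_one_le_of_nonpos (by linarith) (neg_nonpos.mpr hk)
    have p3 : Real.exp (-b ^ (-((i:ℝ) + 2)) * t) ≤ 1 := by
      rw [Real.exp_le_one_iff]
      have : (0:ℝ) < b ^ (-((i:ℝ) + 2)) := Real.rpow_pos_of_pos hb0 _
      nlinarith
    have p2' : (0:ℝ) < a ^ (-((i:ℝ) + 2)) := Real.rpow_pos_of_pos ha0 _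
    have key : ((i:ℝ) + 2) ^ (-k) * Real.exp (-b ^ (-((i:ℝ) + 2)) * t) ≤ 1 :=
      mul_le_one₀ p1 (Real.exp_pos _).le p3
    have hnn : (0:ℝ) ≤ ((i:ℝ) + 2) ^ (-k) := Real.rpow_nonneg (by linarith) _
    simp only [hfS]
    rw [← e]
    nlinarith [Real.exp_pos (-b ^ (-((i:ℝ) + 2)) * t)]
  have hsum : Summable fS :=
    Summable.of_nonneg_of_le hfS_nonneg hfle
      (((summable_geometric_of_lt_one (by positivity) (inv_lt_one_of_one_lt₀ ha)).mul_left _))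
  -- common facts
  have hsubset : ∀ i : ℕ, Set.Ico ((i:ℝ) + 2) ((i:ℝ) + 3) ⊆ Set.Ici 2 := by
    intro i x hx
    have := hx.1
    have hi : (0:ℝ) ≤ (i:ℝ) := Nat.cast_nonneg i
    simp only [Set.mem_Ici]; linarith
  have hdisj : ∀ N : ℕ, (↑(Finset.range N) : Set ℕ).Pairwise
      (Function.onFun Disjoint (fun i : ℕ => Set.Ico ((i:ℝ) + 2) ((i:ℝ) + 3))) := by
    intro N i _ j _ hij
    simp only [Function.onFun]
    rw [Set.Ico_disjoint_Ico]
    rcases hij.lt_or_gt with h | h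
    · have : (i:ℝ) + 1 ≤ (j:ℝ) := by exact_mod_cast h
      calc min ((i:ℝ)+3) ((j:ℝ)+3) ≤ (i:ℝ)+3 := min_le_left _ _
        _ ≤ (j:ℝ)+2 := by linarith
        _ ≤ max ((i:ℝ)+2) ((j:ℝ)+2) := le_max_right _ _
    · have : (j:ℝ) + 1 ≤ (i:ℝ) := by exact_mod_cast h
      calc min ((i:ℝ)+3) ((j:ℝ)+3) ≤ (j:ℝ)+3 := min_le_right _ _
        _ ≤ (i:ℝ)+2 := by linarith
        _ ≤ max ((i:ℝ)+2) ((j:ℝ)+2) := le_max_left _ _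
  have hvol : ∀ i : ℕ, (volume (Set.Ico ((i:ℝ) + 2) ((i:ℝ) + 3))).toReal = 1 := by
    intro i
    rw [Real.volume_Ico, show ((i:ℝ) + 3) - ((i:ℝ) + 2) = 1 from by ring]
    simp
  have hUnion : ⋃ N : ℕ, Set.Ico (2:ℝ) ((N:ℝ) + 2) = Set.Ici 2 := by
    ext x
    simp only [Set.mem_iUnion, Set.mem_Ico, Set.mem_Ici]
    constructor
    · rintro ⟨N, h1, _⟩; exact h1
    · intro hx
      obtain ⟨N, hN⟩ := exists_nat_gt x
      exact ⟨N, hx, by linarith⟩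
  have hmonoset : Monotone (fun N : ℕ => Set.Ico (2:ℝ) ((N:ℝ) + 2)) := by
    intro m n hmn
    apply Set.Ico_subset_Ico_right
    have : (m:ℝ) ≤ (n:ℝ) := Nat.cast_le.mpr hmn
    linarith
  -- LOWER BOUND
  have hlower : a⁻¹ * ∫ x in Set.Ici (2:ℝ), L x ≤ ∑' i, fS i := by
    have hIntL' : IntegrableOn (fun x => a⁻¹ * L x) (Set.Ici 2) := hIntL.const_mul _
    have low_step : ∀ i : ℕ, ∫ x in Set.Ico ((i:ℝ)+2) ((i:ℝ)+3), a⁻¹ * L x ≤ fS i := by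
      intro i
      have hi : (0:ℝ) ≤ (i:ℝ) := Nat.cast_nonneg i
      have hpt : ∀ x ∈ Set.Ico ((i:ℝ)+2) ((i:ℝ)+3), a⁻¹ * L x ≤ fS i := by
        intro x hx
        obtain ⟨hx1, hx2⟩ := hx
        have hxpos : (0:ℝ) < x := by linarith
        have e0 : a ^ (-x) = a⁻¹ * a ^ (-(x-1)) := by
          rw [show -x = (-1) + -(x-1) from by ring, Real.rpow_add ha0, Real.rpow_neg_one]
        have q1 : x ^ (-k) ≤ ((i:ℝ)+2) ^ (-k) :=
          Real.rpow_le_rpow_of_nonpos (by linarith) hx1 (neg_nonpos.mpr hk)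
        have q2 : a ^ (-x) ≤ a ^ (-((i:ℝ)+2)) :=
          Real.rpow_le_rpow_of_exponent_le ha.le (by linarith)
        have q3 : Real.exp (-b ^ (-(x-1)) * t) ≤ Real.exp (-b ^ (-((i:ℝ)+2)) * t) := by
          apply Real.exp_le_exp.mpr
          have : b ^ (-((i:ℝ)+2)) ≤ b ^ (-(x-1)) :=
            Real.rpow_le_rpow_of_exponent_le hb.le (by linarith)
          nlinarith
        calc a⁻¹ * L x = x ^ (-k) * (a⁻¹ * a ^ (-(x-1))) * Real.exp (-b ^ (-(x-1)) * t) := by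
              simp only [hL]; ring
          _ = x ^ (-k) * a ^ (-x) * Real.exp (-b ^ (-(x-1)) * t) := by rw [← e0]
          _ ≤ ((i:ℝ)+2) ^ (-k) * a ^ (-((i:ℝ)+2)) * Real.exp (-b ^ (-((i:ℝ)+2)) * t) :=
              mul_le_mul (mul_le_mul q1 q2 (Real.rpow_pos_of_pos ha0 _).le
                  (Real.rpow_nonneg (by linarith) _)) q3 (Real.exp_pos _).le
                (mul_nonneg (Real.rpow_nonneg (by linarith) _)
                  (Real.rpow_pos_of_pos ha0 _).le)
          _ = fS i := rfl
      calc ∫ x in Set.Ico ((i:ℝ)+2) ((i:ℝ)+3), a⁻¹ * L x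
          ≤ ∫ _x in Set.Ico ((i:ℝ)+2) ((i:ℝ)+3), fS i :=
            setIntegral_mono_on (hIntL'.mono_set (hsubset i))
              ((integrableOn_const_iff).mpr (Or.inr measure_Ico_lt_top)) measurableSet_Ico hpt
        _ = fS i := by rw [setIntegral_const, measureReal_def, hvol i, one_smul]
    have hNle : ∀ N : ℕ, ∫ x in Set.Ico (2:ℝ) ((N:ℝ)+2), a⁻¹ * L x
        ≤ ∑ i ∈ Finset.range N, fS i := by
      intro N
      rw [← sib_union N, integral_biUnion_finset _ (fun i _ => measurableSet_Ico) (hdisj N)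
        (fun i _ => hIntL'.mono_set (hsubset i))]
      exact Finset.sum_le_sum (fun i _ => low_step i)
    have hte : Filter.Tendsto (fun N : ℕ => ∫ x in Set.Ico (2:ℝ) ((N:ℝ)+2), a⁻¹ * L x)
        Filter.atTop (nhds (∫ x in Set.Ici (2:ℝ), a⁻¹ * L x)) := by
      have := tendsto_setIntegral_of_monotone (f := fun x => a⁻¹ * L x) (μ := volume)
        (fun N : ℕ => measurableSet_Ico) hmonoset (by rw [hUnion]; exact hIntL')
      rwa [hUnion] at this
    rw [← integral_const_mul]
    exact le_of_tendsto hte (Filter.Eventually.of_forall (fun N =>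
      (hNle N).trans (hsum.sum_le_tsum _ (fun i _ => hfS_nonneg i))))
  -- UPPER BOUND
  have hupper : ∑' i, fS i ≤ a * ∫ x in Set.Ici (2:ℝ), H x := by
    have hIntH' : IntegrableOn (fun x => a * H x) (Set.Ici 2) := hIntH.const_mul _
    have up_step : ∀ i : ℕ, fS i ≤ ∫ x in Set.Ico ((i:ℝ)+2) ((i:ℝ)+3), a * H x := by
      intro i
      have hi : (0:ℝ) ≤ (i:ℝ) := Nat.cast_nonneg i
      have hpt : ∀ x ∈ Set.Ico ((i:ℝ)+2) ((i:ℝ)+3), fS i ≤ a * H x := by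
        intro x hx
        obtain ⟨hx1, hx2⟩ := hx
        have hx1' : (0:ℝ) < x - 1 := by linarith
        have e0 : a ^ (-(x-1)) = a * a ^ (-x) := by
          rw [show -(x-1) = 1 + -x from by ring, Real.rpow_add ha0, Real.rpow_one]
        have q1 : ((i:ℝ)+2) ^ (-k) ≤ (x-1) ^ (-k) :=
          Real.rpow_le_rpow_of_nonpos hx1' (by linarith) (neg_nonpos.mpr hk)
        have q2 : a ^ (-((i:ℝ)+2)) ≤ a ^ (-(x-1)) :=
          Real.rpow_le_rpow_of_exponent_le ha.le (by linarith)
        have q3 : Real.exp (-b ^ (-((i:ℝ)+2)) * t) ≤ Real.exp (-b ^ (-x) * t) := by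
          apply Real.exp_le_exp.mpr
          have : b ^ (-x) ≤ b ^ (-((i:ℝ)+2)) :=
            Real.rpow_le_rpow_of_exponent_le hb.le (by linarith)
          nlinarith
        calc fS i = ((i:ℝ)+2) ^ (-k) * a ^ (-((i:ℝ)+2)) * Real.exp (-b ^ (-((i:ℝ)+2)) * t) := rfl
          _ ≤ (x-1) ^ (-k) * a ^ (-(x-1)) * Real.exp (-b ^ (-x) * t) :=
              mul_le_mul (mul_le_mul q1 q2 (Real.rpow_pos_of_pos ha0 _).le
                  (Real.rpow_nonneg hx1'.le _)) q3 (Real.exp_pos _).le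
                (mul_nonneg (Real.rpow_nonneg hx1'.le _) (Real.rpow_pos_of_pos ha0 _).le)
          _ = (x-1) ^ (-k) * (a * a ^ (-x)) * Real.exp (-b ^ (-x) * t) := by rw [← e0]
          _ = a * H x := by simp only [hH]; ring
      calc fS i = ∫ _x in Set.Ico ((i:ℝ)+2) ((i:ℝ)+3), fS i := by
            rw [setIntegral_const, measureReal_def, hvol i, one_smul]
        _ ≤ ∫ x in Set.Ico ((i:ℝ)+2) ((i:ℝ)+3), a * H x :=
            setIntegral_mono_on ((integrableOn_const_iff).mpr (Or.inr measure_Ico_lt_top))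
              (hIntH'.mono_set (hsubset i)) measurableSet_Ico hpt
    have hNge : ∀ N : ℕ, ∑ i ∈ Finset.range N, fS i ≤ ∫ x in Set.Ici (2:ℝ), a * H x := by
      intro N
      calc ∑ i ∈ Finset.range N, fS i
          ≤ ∫ x in Set.Ico (2:ℝ) ((N:ℝ)+2), a * H x := by
            rw [← sib_union N, integral_biUnion_finset _ (fun i _ => measurableSet_Ico)
              (hdisj N) (fun i _ => hIntH'.mono_set (hsubset i))]
            exact Finset.sum_le_sum (fun i _ => up_step i)
        _ ≤ ∫ x in Set.Ici (2:ℝ), a * H x := by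
            apply setIntegral_mono_set hIntH'
            · filter_upwards [ae_restrict_mem measurableSet_Ici] with x hx
              simp only [Set.mem_Ici] at hx
              show (0:ℝ) ≤ a * H x
              have h1 : (0:ℝ) ≤ x - 1 := by linarith
              exact mul_nonneg ha0.le (mul_nonneg (mul_nonneg (Real.rpow_nonneg h1 _)
                (Real.rpow_pos_of_pos ha0 _).le) (Real.exp_pos _).le)
            · exact Set.Ico_subset_Ici_self.eventuallyLE
    rw [← integral_const_mul]
    exact le_of_tendsto hsum.hasSum.tendsto_sum_nat (Filter.Eventually.of_forall hNge)
  exact ⟨hsum, hIntL, hIntH, hlower, hupper⟩
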